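/- Let w be a partial extended affine permutation and S a compatible stream whose flow equals the width m of the Shi poset of w. Then the backward numbering d_w^{←,S} numbers every channel C of w by consecutive integers: consecutive elements of C (in southeast order) receive consecutive values, so d_w^{←,S}(C) = ℤ when C is infinite. -/

import Mathlib

/-- The Shi relation for a partial extended affine permutation (domain `U`). -/
def ShiLeP (n : ℕ) (w : ℤ → ℤ) (i j : ℤ) : Prop :=
  i = j ∨ (j < i ∧ w i < w j) ∨ w i + n < w j

/-- An antichain of the Shi poset of the partial permutation `(U, w)`. -/
def IsShiAntichainP (n : ℕ) (U : Set ℤ) (w : ℤ → ℤ) (A : Finset ℤ) : Prop :=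
  A ⊆ Finset.Icc (1 : ℤ) n ∧ (↑A : Set ℤ) ⊆ U ∧
  ∀ i ∈ A, ∀ j ∈ A, i ≠ j → ¬ ShiLeP n w i j ∧ ¬ ShiLeP n w j i

/-- `m` is the width of the Shi poset of the partial permutation `(U, w)`. -/
def IsShiWidthP (n : ℕ) (U : Set ℤ) (w : ℤ → ℤ) (m : ℕ) : Prop :=
  (∃ A : Finset ℤ, IsShiAntichainP n U w A ∧ A.card = m) ∧
  ∀ A : Finset ℤ, IsShiAntichainP n U w A → A.card ≤ m

/-- `(U, w)` is a partial extended affine permutation. -/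
def IsPartialPerm (n : ℕ) (U : Set ℤ) (w : ℤ → ℤ) : Prop :=
  (∀ i : ℤ, i ∈ U ↔ i + n ∈ U) ∧
  (∀ i ∈ U, w (i + n) = w i + n) ∧
  (∀ i ∈ U, ∀ j ∈ U, w i = w j → i = j)

/-- `s` enumerates a stream of flow `f` by consecutive integers from northwest
to southeast (a proper numbering of the stream). -/
def IsStreamEnum (n : ℕ) (f : ℕ) (s : ℤ → ℤ × ℤ) : Prop :=
  (∀ t : ℤ, (s t).1 < (s (t + 1)).1 ∧ (s t).2 < (s (t + 1)).2) ∧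
  (∀ t : ℤ, s (t + f) = ((s t).1 + n, (s t).2 + n))

/-- The stream enumerated by `s` is compatible with the partial permutation:
no common rows or columns with the balls of `(U, w)`. -/
def StreamCompat (U : Set ℤ) (w : ℤ → ℤ) (s : ℤ → ℤ × ℤ) : Prop :=
  ∀ i ∈ U, ∀ t : ℤ, (s t).1 ≠ i ∧ (s t).2 ≠ w i

/-- Monotonicity of a numbering of the balls of a partial permutation. -/
def BMonotone (U : Set ℤ) (w : ℤ → ℤ) (d : ℤ → ℤ) : Prop :=
  ∀ i ∈ U, ∀ j ∈ U, i < j → w i < w j → d i < d j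

/-- `d₀` is the stream numbering: `d₀ b` is the largest `t` with `s t` weakly
northwest of the ball `b` (expressed using the monotone enumeration `s`). -/
def IsStreamNumbering (U : Set ℤ) (w : ℤ → ℤ) (s : ℤ → ℤ × ℤ) (d₀ : ℤ → ℤ) : Prop :=
  ∀ i ∈ U, ((s (d₀ i)).1 ≤ i ∧ (s (d₀ i)).2 ≤ w i) ∧
    ¬((s (d₀ i + 1)).1 ≤ i ∧ (s (d₀ i + 1)).2 ≤ w i)

/-- The backward numbering of `(U, w)` with respect to the stream `s`:
the largest monotone numbering `d` with `s (d b)` weakly northwest of `b`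
for every ball `b`. -/
def IsBackwardNumbering (U : Set ℤ) (w : ℤ → ℤ) (s : ℤ → ℤ × ℤ) (d : ℤ → ℤ) : Prop :=
  BMonotone U w d ∧
  (∀ i ∈ U, (s (d i)).1 ≤ i ∧ (s (d i)).2 ≤ w i) ∧
  ∀ d' : ℤ → ℤ, BMonotone U w d' →
    (∀ i ∈ U, (s (d' i)).1 ≤ i ∧ (s (d' i)).2 ≤ w i) →
    ∀ i ∈ U, d' i ≤ d i

/-- An `(n,n)`-invariant southeast chain of balls of the partial permutation. -/
def IsChannelChainP (n : ℕ) (U : Set ℤ) (w : ℤ → ℤ) (C : Set ℤ) : Prop :=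
  C ⊆ U ∧ (∀ i : ℤ, i ∈ C ↔ i + n ∈ C) ∧ ∀ i ∈ C, ∀ j ∈ C, i < j → w i < w j

/-- A channel of the partial permutation: such a chain of maximal density. -/
noncomputable def chDensityP (n : ℕ) (C : Set ℤ) : ℕ := (C ∩ Set.Icc (1 : ℤ) n).ncard

def IsChannelP (n : ℕ) (U : Set ℤ) (w : ℤ → ℤ) (C : Set ℤ) : Prop :=
  IsChannelChainP n U w C ∧
  ∀ D : Set ℤ, IsChannelChainP n U w D → chDensityP n D ≤ chDensityP n C

theorem stmt14 (n : ℕ) (hn : 0 < n) (U : Set ℤ) (w : ℤ → ℤ)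
    (hpp : IsPartialPerm n U w)
    (m : ℕ) (hm : IsShiWidthP n U w m)
    (s : ℤ → ℤ × ℤ) (hs : IsStreamEnum n m s) (hcompat : StreamCompat U w s)
    (d : ℤ → ℤ) (hd : IsBackwardNumbering U w s d)
    (C : Set ℤ) (hC : IsChannelP n U w C) (hCm : chDensityP n C = m) :
    (∀ i ∈ C, ∀ j ∈ C, i < j → (∀ c ∈ C, ¬(i < c ∧ c < j)) → d j = d i + 1) ∧
    (∀ v : ℤ, ∃ i ∈ C, d i = v) := by
  classical
  obtain ⟨⟨hCU, hCper, hCchain⟩, -⟩ := hC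
  obtain ⟨hmono, hNW, hmax⟩ := hd
  obtain ⟨hUper, hwper, hwinj⟩ := hpp
  obtain ⟨hsmono, hsper⟩ := hs
  -- m is positive
  have hm1 : 1 ≤ m := by
    by_contra h
    have hm0 : (m : ℤ) = 0 := by omega
    have h0 := hsper 0
    rw [hm0, add_zero] at h0
    have h1 := congrArg Prod.fst h0
    dsimp only at h1
    omega
  -- semi-periodicity of d
  have hper : ∀ i ∈ U, d (i + n) = d i + m := by
    have h1 : ∀ i ∈ U, d (i + n) - m ≤ d i := by
      refine hmax (fun i => d (i + n) - m) (fun i hi j hj hij hw => ?_) (fun i hi => ?_)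
      · have hi' : i + n ∈ U := (hUper i).mp hi
        have hj' : j + n ∈ U := (hUper j).mp hj
        have hlt := hmono (i + n) hi' (j + n) hj' (by omega)
          (by rw [hwper i hi, hwper j hj]; omega)
        simp only
        omega
      · have hi' : i + n ∈ U := (hUper i).mp hi
        have h := hNW (i + n) hi'
        have hs' := hsper (d (i + n) - m)
        rw [show d (i + n) - m + m = d (i + n) by ring] at hs'
        rw [hs', hwper i hi] at h
        dsimp only at h ⊢
        exact ⟨by omega, by omega⟩
    have h2 : ∀ i ∈ U, d (i - n) + m ≤ d i := by
      refine hmax (fun i => d (i - n) + m) (fun i hi j hj hij hw => ?_) (fun i hi => ?_)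
      · have hi' : i - n ∈ U := (hUper (i - n)).mpr (by rw [show i - n + n = i by ring]; exact hi)
        have hj' : j - n ∈ U := (hUper (j - n)).mpr (by rw [show j - n + n = j by ring]; exact hj)
        have hwi : w (i - n) = w i - n := by
          have := hwper (i - n) hi'
          rw [show i - n + n = i by ring] at this
          omega
        have hwj : w (j - n) = w j - n := by
          have := hwper (j - n) hj'
          rw [show j - n + n = j by ring] at this
          omega
        have hlt := hmono (i - n) hi' (j - n) hj' (by omega) (by omega)
        simp only
        omega
      · have hi' : i - n ∈ U := (hUper (i - n)).mpr (by rw [show i - n + n = i by ring]; exact hi)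
        have h := hNW (i - n) hi'
        have hwi : w (i - n) = w i - n := by
          have := hwper (i - n) hi'
          rw [show i - n + n = i by ring] at this
          omega
        have hs' := hsper (d (i - n))
        rw [hs']
        dsimp only
        rw [hwi] at h
        exact ⟨by omega, by omega⟩
    intro i hi
    have hi' : i + n ∈ U := (hUper i).mp hi
    have ha := h1 i hi
    have hb := h2 (i + n) hi'
    rw [show i + n - n = i by ring] at hb
    omega
  -- iterated periodicity of U, C, d
  have hUk : ∀ (k : ℤ) (i : ℤ), i ∈ U → i + k * n ∈ U := by
    intro k
    induction k using Int.induction_on with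
    | zero => intro i hi; simpa using hi
    | succ k ih =>
        intro i hi
        have h := (hUper (i + (k : ℤ) * n)).mp (ih i hi)
        rw [show i + ((k : ℤ) + 1) * n = i + (k : ℤ) * n + n by ring]
        exact h
    | pred k ih =>
        intro i hi
        have h2 : i + (-(k : ℤ) - 1) * n + n ∈ U := by
          rw [show i + (-(k : ℤ) - 1) * n + n = i + -(k : ℤ) * n by ring]
          exact ih i hi
        exact (hUper _).mpr h2
  have hCk : ∀ (k : ℤ) (i : ℤ), i ∈ C → i + k * n ∈ C := by
    intro k
    induction k using Int.induction_on with
    | zero => intro i hi; simpa using hi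
    | succ k ih =>
        intro i hi
        have h := (hCper (i + (k : ℤ) * n)).mp (ih i hi)
        rw [show i + ((k : ℤ) + 1) * n = i + (k : ℤ) * n + n by ring]
        exact h
    | pred k ih =>
        intro i hi
        have h2 : i + (-(k : ℤ) - 1) * n + n ∈ C := by
          rw [show i + (-(k : ℤ) - 1) * n + n = i + -(k : ℤ) * n by ring]
          exact ih i hi
        exact (hCper _).mpr h2
  have hdk : ∀ (k : ℤ) (i : ℤ), i ∈ U → d (i + k * n) = d i + k * m := by
    intro k
    induction k using Int.induction_on with
    | zero => intro i hi; simp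
    | succ k ih =>
        intro i hi
        have h := hper (i + (k : ℤ) * n) (hUk (k : ℤ) i hi)
        rw [show i + ((k : ℤ) + 1) * n = i + (k : ℤ) * n + n by ring, h, ih i hi]
        ring
    | pred k ih =>
        intro i hi
        have hmem := hUk (-(k : ℤ) - 1) i hi
        have h := hper (i + (-(k : ℤ) - 1) * n) hmem
        rw [show i + (-(k : ℤ) - 1) * n + n = i + -(k : ℤ) * n by ring, ih i hi] at h
        have e1 : d (i + (-(k : ℤ) - 1) * n) = d i + -(k : ℤ) * m - m := by omega
        rw [e1]
        ring
  -- window finsets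
  set F : ℤ → Finset ℤ := fun a => (Finset.Ioc a (a + n)).filter (fun x => x ∈ C) with hF
  have hmemF : ∀ (a x : ℤ), x ∈ F a ↔ (a < x ∧ x ≤ a + n) ∧ x ∈ C := by
    intro a x
    rw [hF]
    simp [Finset.mem_filter, Finset.mem_Ioc]
  have hF0 : (F 0).card = m := by
    have hset : C ∩ Set.Icc (1 : ℤ) n = ↑(F 0) := by
      ext x
      simp only [Set.mem_inter_iff, Set.mem_Icc, Finset.coe_filter, Set.mem_setOf_eq,
        Finset.mem_coe, hmemF]
      constructor
      · rintro ⟨h1, h2, h3⟩; exact ⟨⟨by omega, by omega⟩, h1⟩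
      · rintro ⟨⟨h1, h2⟩, h3⟩; exact ⟨h3, by omega, by omega⟩
    rw [chDensityP, hset, Set.ncard_coe_finset] at hCm
    exact hCm
  have hstep : ∀ a : ℤ, (F (a + 1)).card = (F a).card := by
    intro a
    by_cases h1 : (a + 1) ∈ C
    · have h2 : a + n + 1 ∈ C := by
        have := (hCper (a + 1)).mp h1
        rw [show a + 1 + n = a + n + 1 by ring] at this
        exact this
      have hmem : a + 1 ∈ F a := (hmemF a (a + 1)).mpr ⟨⟨by omega, by omega⟩, h1⟩
      have hnot : a + n + 1 ∉ (F a).erase (a + 1) := by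
        intro h
        have := (hmemF a (a + n + 1)).mp (Finset.mem_of_mem_erase h)
        omega
      have he : F (a + 1) = insert (a + n + 1) ((F a).erase (a + 1)) := by
        ext x
        rw [Finset.mem_insert, Finset.mem_erase, hmemF, hmemF]
        constructor
        · rintro ⟨⟨hx1, hx2⟩, hx3⟩
          by_cases hx : x = a + n + 1
          · exact Or.inl hx
          · exact Or.inr ⟨by omega, ⟨by omega, by omega⟩, hx3⟩
        · rintro (rfl | ⟨hx, ⟨hx1, hx2⟩, hx3⟩)
          · exact ⟨⟨by omega, by omega⟩, h2⟩
          · exact ⟨⟨by omega, by omega⟩, hx3⟩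
      rw [he, Finset.card_insert_of_notMem hnot, Finset.card_erase_of_mem hmem]
      have hpos : 0 < (F a).card := Finset.card_pos.mpr ⟨a + 1, hmem⟩
      omega
    · have h2 : a + n + 1 ∉ C := by
        intro h
        apply h1
        exact (hCper (a + 1)).mpr (by rw [show a + 1 + n = a + n + 1 by ring]; exact h)
      have he : F (a + 1) = F a := by
        ext x
        rw [hmemF, hmemF]
        constructor
        · rintro ⟨⟨hx1, hx2⟩, hx3⟩
          refine ⟨⟨by omega, ?_⟩, hx3⟩
          by_cases hx : x = a + n + 1
          · exact absurd (hx ▸ hx3) h2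
          · omega
        · rintro ⟨⟨hx1, hx2⟩, hx3⟩
          refine ⟨⟨?_, by omega⟩, hx3⟩
          by_cases hx : x = a + 1
          · exact absurd (hx ▸ hx3) h1
          · omega
      rw [he]
  have hFcard : ∀ a : ℤ, (F a).card = m := by
    have key : ∀ a : ℤ, (F a).card = (F 0).card := by
      intro a
      induction a using Int.induction_on with
      | zero => rfl
      | succ k ih => rw [hstep (k : ℤ)]; exact ih
      | pred k ih =>
          have h := hstep (-(k : ℤ) - 1)
          rw [show -(k : ℤ) - 1 + 1 = -(k : ℤ) by ring] at h
          rw [← h]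
          exact ih
    intro a
    rw [key a, hF0]
  -- d is strictly increasing along C
  have hdC : ∀ i ∈ C, ∀ j ∈ C, i < j → d i < d j := fun i hi j hj hij =>
    hmono i (hCU hi) j (hCU hj) hij (hCchain i hi j hj hij)
  -- image of a window under d
  have himg : ∀ i ∈ C, Finset.image d (F i) = Finset.Ioc (d i) (d i + m) := by
    intro i hi
    have hsub : Finset.image d (F i) ⊆ Finset.Ioc (d i) (d i + m) := by
      intro y hy
      obtain ⟨x, hx, rfl⟩ := Finset.mem_image.mp hy
      obtain ⟨⟨hx1, hx2⟩, hx3⟩ := (hmemF i x).mp hx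
      rw [Finset.mem_Ioc]
      refine ⟨hdC i hi x hx3 hx1, ?_⟩
      have hin : i + n ∈ C := (hCper i).mp hi
      have hdi : d (i + n) = d i + m := hper i (hCU hi)
      rcases eq_or_lt_of_le hx2 with h | h
      · rw [h, hdi]
      · have := hdC x hx3 (i + n) hin h
        omega
    have hdinj : Set.InjOn d ↑(F i) := by
      intro x hx y hy hxy
      rw [Finset.mem_coe, hmemF] at hx hy
      rcases lt_trichotomy x y with h | h | h
      · exact absurd hxy (by have := hdC x hx.2 y hy.2 h; omega)
      · exact h
      · exact absurd hxy (by have := hdC y hy.2 x hx.2 h; omega)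
    have hcard : (Finset.image d (F i)).card = m := by
      rw [Finset.card_image_of_injOn hdinj, hFcard]
    apply Finset.eq_of_subset_of_card_le hsub
    rw [hcard, Int.card_Ioc]
    omega
  constructor
  · intro i hi j hj hij hgap
    have h1 : d i + 1 ∈ Finset.Ioc (d i) (d i + m) := by
      rw [Finset.mem_Ioc]
      omega
    rw [← himg i hi] at h1
    obtain ⟨c, hc, hdc⟩ := Finset.mem_image.mp h1
    obtain ⟨⟨hc1, hc2⟩, hc3⟩ := (hmemF i c).mp hc
    have hjc : j ≤ c := by
      by_contra h
      exact hgap c hc3 ⟨hc1, by omega⟩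
    have hij' : d i < d j := hdC i hi j hj hij
    rcases eq_or_lt_of_le hjc with h | h
    · rw [← h] at hdc; omega
    · have := hdC j hj c hc3 h
      omega
  · intro v
    have hne : (F 0).Nonempty := by
      rw [← Finset.card_pos, hFcard]
      omega
    obtain ⟨i₀, hi₀F⟩ := hne
    have hi₀ : i₀ ∈ C := ((hmemF 0 i₀).mp hi₀F).2
    set k : ℤ := (v - d i₀ - 1) / m with hk
    have hmpos : (0 : ℤ) < m := by exact_mod_cast hm1
    have hdiv := Int.mul_ediv_add_emod (v - d i₀ - 1) m
    have hr1 : 0 ≤ (v - d i₀ - 1) % m := Int.emod_nonneg _ (by omega)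
    have hr2 : (v - d i₀ - 1) % m < m := Int.emod_lt_of_pos _ hmpos
    have hi'C : i₀ + k * n ∈ C := hCk k i₀ hi₀
    have hdi' : d (i₀ + k * n) = d i₀ + k * m := hdk k i₀ (hCU hi₀)
    have hv : v ∈ Finset.Ioc (d (i₀ + k * n)) (d (i₀ + k * n) + m) := by
      rw [Finset.mem_Ioc, hdi']
      constructor <;> [nlinarith [hdiv, hr1, hr2]; nlinarith [hdiv, hr1, hr2]]
    rw [← himg (i₀ + k * n) hi'C] at hv
    obtain ⟨c, hc, hdc⟩ := Finset.mem_image.mp hv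
    exact ⟨c, ((hmemF (i₀ + k * n) c).mp hc).2, hdc⟩
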